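/- Let F(x,y,z,t) = (x − z)² + (y − t)² + R(z,t) where R ∈ C[z,t] is nonzero of degree at most 2. Then F is Cartesian if and only if there exists c ∈ C such that R(z,t) is divisible by (z + it − c) or by (z − it − c) in C[z,t]. -/

import Mathlib

open MvPolynomial Complex

/-- A polynomial `P ∈ ℂ[x,y,z,t]` is Cartesian if `P = G(x,y)·F1 + H(z,t)·F2`
with `G`, `H` non-constant. -/
def IsCartesian (P : MvPolynomial (Fin 4) ℂ) : Prop :=
  ∃ (G H : MvPolynomial (Fin 2) ℂ) (F1 F2 : MvPolynomial (Fin 4) ℂ),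
    (∀ c : ℂ, G ≠ MvPolynomial.C c) ∧ (∀ c : ℂ, H ≠ MvPolynomial.C c) ∧
    P = MvPolynomial.rename (![0, 1] : Fin 2 → Fin 4) G * F1
        + MvPolynomial.rename (![2, 3] : Fin 2 → Fin 4) H * F2


lemma evalHom_aeval {S : Type*} [CommSemiring S] [Algebra ℂ S] (w : Fin 2 → S)
    (φ : S →+* ℂ) (hφ : ∀ c : ℂ, φ (algebraMap ℂ S c) = c) (P : MvPolynomial (Fin 2) ℂ) :
    φ (aeval w P) = eval (fun i => φ (w i)) P := by
  induction P using MvPolynomial.induction_on with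
  | C a => simp [hφ]
  | add p q hp hq => simp [map_add, hp, hq]
  | mul_X p n hp => simp [map_mul, hp]

lemma eval_aeval_poly (v : Fin 2 → Polynomial ℂ) (b : ℂ) (P : MvPolynomial (Fin 2) ℂ) :
    Polynomial.eval b (MvPolynomial.aeval v P) = eval (fun i => Polynomial.eval b (v i)) P :=
  evalHom_aeval v (Polynomial.evalRingHom b) (by simp) P

lemma eval_aeval_mv (w : Fin 2 → MvPolynomial (Fin 2) ℂ) (u : Fin 2 → ℂ) (P : MvPolynomial (Fin 2) ℂ) :
    eval u (aeval w P) = eval (fun i => eval u (w i)) P :=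
  evalHom_aeval w (MvPolynomial.eval u) (by simp) P

lemma eta2 (x : Fin 2 → ℂ) : ![x 0, x 1] = x := by
  funext i; fin_cases i <;> simp

lemma infinite_zeros (G : MvPolynomial (Fin 2) ℂ) (hG : ∀ c : ℂ, G ≠ C c) :
    {p : Fin 2 → ℂ | eval p G = 0}.Infinite := by
  by_contra hfin
  rw [Set.not_infinite] at hfin
  set Z := {p : Fin 2 → ℂ | eval p G = 0} with hZ
  set B : Set ℂ := (fun p : Fin 2 → ℂ => p 0) '' Z with hBdef
  have hB : B.Finite := hfin.image _
  set f : ℂ → Polynomial ℂ := fun a => aeval ![Polynomial.C a, Polynomial.X] G with hf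
  have hfeval : ∀ a b : ℂ, Polynomial.eval b (f a) = eval ![a, b] G := by
    intro a b
    rw [hf, eval_aeval_poly]
    congr 1; congr 1; funext i; fin_cases i <;> simp
  have hconst : ∀ a : ℂ, a ∉ B → ∀ b : ℂ, eval ![a,b] G = eval ![a,(0:ℂ)] G := by
    intro a ha b
    have hnoroot : ∀ b : ℂ, ¬ (f a).IsRoot b := by
      intro b hb
      exact ha ⟨![a,b], by simpa [hZ, Polynomial.IsRoot, hfeval a b] using hb, by simp⟩
    have h0 : (f a).degree ≤ 0 := by
      by_contra h
      push_neg at h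
      obtain ⟨z, hz⟩ := Complex.exists_root h
      exact hnoroot z hz
    have hC := Polynomial.eq_C_of_degree_le_zero h0
    calc eval ![a,b] G = Polynomial.eval b (f a) := (hfeval a b).symm
      _ = Polynomial.eval 0 (f a) := by rw [hC]; simp
      _ = eval ![a,(0:ℂ)] G := hfeval a 0
  set g : ℂ → Polynomial ℂ := fun b => aeval ![Polynomial.X, Polynomial.C b] G with hg
  have hgeval : ∀ b a : ℂ, Polynomial.eval a (g b) = eval ![a, b] G := by
    intro b a
    rw [hg, eval_aeval_poly]
    congr 1; congr 1; funext i; fin_cases i <;> simp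
  have hgb : ∀ b : ℂ, g b = g 0 := by
    intro b
    have hsub : ({x | (g b - g 0).IsRoot x}).Infinite := by
      apply Set.Infinite.mono (s := {a : ℂ | a ∉ B})
      · intro a ha
        simp only [Set.mem_setOf_eq, Polynomial.IsRoot, Polynomial.eval_sub]
        rw [hgeval, hgeval]
        rw [hconst a ha b]
        exact sub_self _
      · exact hB.infinite_compl
    have := Polynomial.eq_zero_of_infinite_isRoot _ hsub
    exact sub_eq_zero.mp this
  by_cases hd : 0 < (g 0).degree
  · obtain ⟨a₀, ha₀⟩ := Complex.exists_root hd
    have hmem : ∀ b : ℂ, (![a₀, b] : Fin 2 → ℂ) ∈ Z := by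
      intro b
      have : eval ![a₀, b] G = 0 := by
        rw [← hgeval b a₀, hgb b]
        exact ha₀
      simpa [hZ] using this
    have hinj : Function.Injective (fun b : ℂ => (![a₀, b] : Fin 2 → ℂ)) := by
      intro b b' h
      simpa using congrFun h 1
    have : (Set.range fun b : ℂ => (![a₀, b] : Fin 2 → ℂ)).Infinite :=
      Set.infinite_range_of_injective hinj
    exact this (hfin.subset (by rintro p ⟨b, rfl⟩; exact hmem b))
  · push_neg at hd
    have hC := Polynomial.eq_C_of_degree_le_zero hd
    apply hG ((g 0).coeff 0)
    apply MvPolynomial.funext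
    intro x
    have hx : eval x G = eval ![x 0, x 1] G := by rw [eta2]
    rw [hx, ← hgeval (x 1) (x 0), hgb (x 1), hC]
    simp

lemma sub_theta_dvd (ε c₀ : ℂ) (P : MvPolynomial (Fin 2) ℂ) :
    (X 0 + C ε * X 1 - C c₀) ∣ (P - (aeval (R := ℂ) (![C c₀ - C ε * X 1, X 1] : Fin 2 → MvPolynomial (Fin 2) ℂ)) P) := by
  induction P using MvPolynomial.induction_on with
  | C a => simp
  | add p q hp hq =>
    have : p + q - (aeval (R := ℂ) (![C c₀ - C ε * X 1, X 1] : Fin 2 → MvPolynomial (Fin 2) ℂ)) (p + q)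
        = (p - (aeval (R := ℂ) (![C c₀ - C ε * X 1, X 1] : Fin 2 → MvPolynomial (Fin 2) ℂ)) p) + (q - (aeval (R := ℂ) (![C c₀ - C ε * X 1, X 1] : Fin 2 → MvPolynomial (Fin 2) ℂ)) q) := by
      rw [map_add]; ring
    rw [this]; exact dvd_add hp hq
  | mul_X p n hp =>
    have hx : (X 0 + C ε * X 1 - C c₀ : MvPolynomial (Fin 2) ℂ) ∣ ((X n : MvPolynomial (Fin 2) ℂ) - (aeval (R := ℂ) (![C c₀ - C ε * X 1, X 1] : Fin 2 → MvPolynomial (Fin 2) ℂ)) (X n)) := by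
      fin_cases n
      · simp only [aeval_X]
        refine ⟨1, ?_⟩
        show (X 0 : MvPolynomial (Fin 2) ℂ) - ![C c₀ - C ε * X 1, X 1] 0 = _
        simp only [Matrix.cons_val_zero]
        ring
      · simp only [aeval_X]
        show (X 0 + C ε * X 1 - C c₀) ∣ ((X 1 : MvPolynomial (Fin 2) ℂ) - ![C c₀ - C ε * X 1, X 1] 1)
        simp
    have : p * X n - (aeval (R := ℂ) (![C c₀ - C ε * X 1, X 1] : Fin 2 → MvPolynomial (Fin 2) ℂ)) (p * X n)
        = (p - (aeval (R := ℂ) (![C c₀ - C ε * X 1, X 1] : Fin 2 → MvPolynomial (Fin 2) ℂ)) p) * X n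
          + (aeval (R := ℂ) (![C c₀ - C ε * X 1, X 1] : Fin 2 → MvPolynomial (Fin 2) ℂ)) p * ((X n : MvPolynomial (Fin 2) ℂ) - (aeval (R := ℂ) (![C c₀ - C ε * X 1, X 1] : Fin 2 → MvPolynomial (Fin 2) ℂ)) (X n)) := by
      rw [map_mul]; ring
    rw [this]
    exact dvd_add (hp.mul_right _) (hx.mul_left _)

lemma dvd_of_line_zeros (Rp : MvPolynomial (Fin 2) ℂ) (ε c₀ : ℂ) (D : Set ℂ) (hD : D.Infinite)
    (hz : ∀ d ∈ D, eval ![c₀ - ε * d, d] Rp = 0) :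
    (X 0 + C ε * X 1 - C c₀) ∣ Rp := by
  have hψ : (aeval ![Polynomial.C c₀ - Polynomial.C ε * Polynomial.X, Polynomial.X] Rp : Polynomial ℂ) = 0 := by
    apply Polynomial.eq_zero_of_infinite_isRoot
    apply hD.mono
    intro d hd
    simp only [Set.mem_setOf_eq, Polynomial.IsRoot]
    rw [eval_aeval_poly]
    have h : (fun i => Polynomial.eval d (![Polynomial.C c₀ - Polynomial.C ε * Polynomial.X, Polynomial.X] i))
        = ![c₀ - ε * d, d] := by
      funext i; fin_cases i <;> simp
    rw [h]; exact hz d hd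
  have hθ : (aeval (R := ℂ) (![C c₀ - C ε * X 1, X 1] : Fin 2 → MvPolynomial (Fin 2) ℂ)) Rp = 0 := by
    apply MvPolynomial.funext (q := 0)
    intro x
    rw [eval_aeval_mv]
    have h : (fun i => eval x (![(C c₀ - C ε * X 1 : MvPolynomial (Fin 2) ℂ), X 1] i))
        = ![c₀ - ε * x 1, x 1] := by
      funext i; fin_cases i <;> simp
    rw [h]
    have h2 : eval ![c₀ - ε * x 1, x 1] Rp
        = Polynomial.eval (x 1) (aeval ![Polynomial.C c₀ - Polynomial.C ε * Polynomial.X, Polynomial.X] Rp) := by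
      rw [eval_aeval_poly]
      congr 1; congr 1; funext i; fin_cases i <;> simp
    rw [h2, hψ]; simp
  have h := sub_theta_dvd ε c₀ Rp
  rwa [hθ, sub_zero] at h

lemma nonconst_lin (a c : ℂ) : ∀ c' : ℂ, (X 0 + C a * X 1 - C c : MvPolynomial (Fin 2) ℂ) ≠ C c' := by
  intro c' h
  have h1 := congrArg (eval ![c, 0]) h
  have h2 := congrArg (eval ![c + 1, 0]) h
  simp at h1 h2
  rw [← h2] at h1
  simp at h1

lemma easy_dir (R : MvPolynomial (Fin 2) ℂ) (a c : ℂ) (ha2 : a * a = -1)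
    (h : (X 0 + C a * X 1 - C c : MvPolynomial (Fin 2) ℂ) ∣ R) :
    IsCartesian
      ((MvPolynomial.X 0 - MvPolynomial.X 2) ^ 2
        + (MvPolynomial.X 1 - MvPolynomial.X 3) ^ 2
        + MvPolynomial.rename (![2, 3] : Fin 2 → Fin 4) R) := by
  obtain ⟨S, hS⟩ := h
  refine ⟨X 0 + C a * X 1 - C c, X 0 + C a * X 1 - C c,
    X 0 - C a * X 1 - X 2 + C a * X 3,
    rename (![2, 3] : Fin 2 → Fin 4) S - (X 0 - C a * X 1 - X 2 + C a * X 3),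
    nonconst_lin a c, nonconst_lin a c, ?_⟩
  have ha4 : (C a : MvPolynomial (Fin 4) ℂ) * C a = -1 := by
    rw [← map_mul, ha2]; simp
  rw [hS]
  simp only [map_add, map_sub, map_mul, rename_X, rename_C, Matrix.cons_val_zero, Matrix.cons_val_one, Matrix.head_cons]
  linear_combination ((X 1 : MvPolynomial (Fin 4) ℂ) - X 3)^2 * ha4

lemma hard_dir (R : MvPolynomial (Fin 2) ℂ)
    (hF : ∃ (G H : MvPolynomial (Fin 2) ℂ) (F1 F2 : MvPolynomial (Fin 4) ℂ),
      (∀ c : ℂ, G ≠ MvPolynomial.C c) ∧ (∀ c : ℂ, H ≠ MvPolynomial.C c) ∧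
      ((MvPolynomial.X 0 - MvPolynomial.X 2) ^ 2
        + (MvPolynomial.X 1 - MvPolynomial.X 3) ^ 2
        + MvPolynomial.rename (![2, 3] : Fin 2 → Fin 4) R)
        = MvPolynomial.rename (![0, 1] : Fin 2 → Fin 4) G * F1
          + MvPolynomial.rename (![2, 3] : Fin 2 → Fin 4) H * F2) :
    ∃ c : ℂ,
      ((MvPolynomial.X 0 + MvPolynomial.C Complex.I * MvPolynomial.X 1
          - MvPolynomial.C c : MvPolynomial (Fin 2) ℂ) ∣ R) ∨
      ((MvPolynomial.X 0 - MvPolynomial.C Complex.I * MvPolynomial.X 1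
          - MvPolynomial.C c : MvPolynomial (Fin 2) ℂ) ∣ R) := by
  obtain ⟨G, H, F1, F2, hG, hH, hEq⟩ := hF
  have hSG : {p : Fin 2 → ℂ | eval p G = 0}.Infinite := infinite_zeros G hG
  have hSH : {p : Fin 2 → ℂ | eval p H = 0}.Infinite := infinite_zeros H hH
  set SG := {p : Fin 2 → ℂ | eval p G = 0} with hSGdef
  set SH := {p : Fin 2 → ℂ | eval p H = 0} with hSHdef
  have star : ∀ p ∈ SG, ∀ q ∈ SH,
      (p 0 - q 0)^2 + (p 1 - q 1)^2 + eval q R = 0 := by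
    intro p hp q hq
    have hev := congrArg (eval ![p 0, p 1, q 0, q 1]) hEq
    have c1 : (![p 0, p 1, q 0, q 1] ∘ (![0,1] : Fin 2 → Fin 4)) = p := by
      funext i; fin_cases i <;> simp
    have c2 : (![p 0, p 1, q 0, q 1] ∘ (![2,3] : Fin 2 → Fin 4)) = q := by
      funext i; fin_cases i <;> simp
    simp only [hSGdef, Set.mem_setOf_eq] at hp
    simp only [hSHdef, Set.mem_setOf_eq] at hq
    simp only [map_add, map_mul, map_pow, map_sub, eval_rename, c1, c2, eval_X, hp, hq,
      zero_mul, mul_zero, add_zero, zero_add] at hev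
    rw [show ((![p 0, p 1, q 0, q 1] : Fin 4 → ℂ) 0) = p 0 from rfl,
        show ((![p 0, p 1, q 0, q 1] : Fin 4 → ℂ) 1) = p 1 from rfl,
        show ((![p 0, p 1, q 0, q 1] : Fin 4 → ℂ) 2) = q 0 from rfl,
        show ((![p 0, p 1, q 0, q 1] : Fin 4 → ℂ) 3) = q 1 from rfl] at hev
    linear_combination hev
  obtain ⟨q, hq, q', hq', hqq'⟩ := hSH.nontrivial
  obtain ⟨p₀, hp₀⟩ := hSG.nonempty
  obtain ⟨u0, hu0⟩ : ∃ u0 : ℂ, u0 = q' 0 - q 0 := ⟨_, rfl⟩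
  obtain ⟨u1, hu1⟩ : ∃ u1 : ℂ, u1 = q' 1 - q 1 := ⟨_, rfl⟩
  have hu : ¬(u0 = 0 ∧ u1 = 0) := by
    rintro ⟨h0, h1⟩
    apply hqq'
    rw [h0] at hu0; rw [h1] at hu1
    funext i
    fin_cases i
    · have := hu0.symm; rw [sub_eq_zero] at this; exact this.symm
    · have := hu1.symm; rw [sub_eq_zero] at this; exact this.symm
  have line : ∀ p ∈ SG, u0 * (p 0 - p₀ 0) + u1 * (p 1 - p₀ 1) = 0 := by
    intro p hp
    have e1 := star p hp q hq
    have e2 := star p hp q' hq'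
    have e3 := star p₀ hp₀ q hq
    have e4 := star p₀ hp₀ q' hq'
    rw [hu0, hu1]
    linear_combination (e1 - e2 - e3 + e4) / 2
  obtain ⟨v0, hv0⟩ : ∃ v0 : ℂ, v0 = -u1 := ⟨_, rfl⟩
  obtain ⟨v1, hv1⟩ : ∃ v1 : ℂ, v1 = u0 := ⟨_, rfl⟩
  have param : ∀ p ∈ SG, ∃ s : ℂ, p 0 = p₀ 0 + s * v0 ∧ p 1 = p₀ 1 + s * v1 := by
    intro p hp
    have hl := line p hp
    by_cases h0 : u0 = 0
    · have h1 : u1 ≠ 0 := fun h => hu ⟨h0, h⟩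
      refine ⟨-(p 0 - p₀ 0) / u1, ?_, ?_⟩
      · rw [hv0]; field_simp; ring
      · rw [hv1, h0, mul_zero, add_zero]
        rw [h0, zero_mul, zero_add] at hl
        rcases mul_eq_zero.mp hl with h | h
        · exact absurd h h1
        · rw [sub_eq_zero] at h; exact h
    · refine ⟨(p 1 - p₀ 1) / u0, ?_, ?_⟩
      · rw [hv0]; field_simp; linear_combination hl
      · rw [hv1]; field_simp; ring
  obtain ⟨T, hTdef⟩ : ∃ T : Set ℂ, T = {s : ℂ | (![p₀ 0 + s * v0, p₀ 1 + s * v1] : Fin 2 → ℂ) ∈ SG} := ⟨_, rfl⟩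
  have hT : T.Infinite := by
    apply Set.Infinite.of_image (fun s => (![p₀ 0 + s * v0, p₀ 1 + s * v1] : Fin 2 → ℂ))
    apply Set.Infinite.mono _ hSG
    intro p hp
    obtain ⟨s, hs0, hs1⟩ := param p hp
    have hps : (![p₀ 0 + s * v0, p₀ 1 + s * v1] : Fin 2 → ℂ) = p := by
      funext i; fin_cases i
      · exact hs0.symm
      · exact hs1.symm
    exact ⟨s, by rw [hTdef]; simp only [Set.mem_setOf_eq]; rw [hps]; exact hp, hps⟩
  have coeffs : ∀ qq ∈ SH, (v0^2 + v1^2 = 0 ∧ v0*(p₀ 0 - qq 0) + v1*(p₀ 1 - qq 1) = 0) := by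
    intro qq hqq
    obtain ⟨fq, hfqdef⟩ : ∃ fq : Polynomial ℂ, fq
        = Polynomial.C (v0^2 + v1^2) * Polynomial.X^2
          + Polynomial.C (2*(v0*(p₀ 0 - qq 0) + v1*(p₀ 1 - qq 1))) * Polynomial.X
          + Polynomial.C ((p₀ 0 - qq 0)^2 + (p₀ 1 - qq 1)^2 + eval qq R) := ⟨_, rfl⟩
    have hroot : ∀ s ∈ T, fq.IsRoot s := by
      intro s hs
      rw [hTdef] at hs
      have hst := star _ hs qq hqq
      simp only [Matrix.cons_val_zero, Matrix.cons_val_one, Matrix.head_cons] at hst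
      simp only [Polynomial.IsRoot, hfqdef, Polynomial.eval_add, Polynomial.eval_mul,
        Polynomial.eval_pow, Polynomial.eval_C, Polynomial.eval_X]
      linear_combination hst
    have hf0 : fq = 0 := Polynomial.eq_zero_of_infinite_isRoot _ (hT.mono hroot)
    have E0 := congrArg (Polynomial.eval 0) hf0
    have E1 := congrArg (Polynomial.eval 1) hf0
    have E2 := congrArg (Polynomial.eval (-1)) hf0
    simp only [hfqdef, Polynomial.eval_add, Polynomial.eval_mul, Polynomial.eval_pow,
      Polynomial.eval_C, Polynomial.eval_X, Polynomial.eval_zero] at E0 E1 E2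
    constructor
    · linear_combination (E1 + E2) / 2 - E0
    · linear_combination (E1 - E2) / 4
  have hv2 : v0^2 + v1^2 = 0 := (coeffs q hq).1
  have hvne : v0 ≠ 0 := by
    intro h
    have h1 : v1 = 0 := by
      have := hv2
      rw [h] at this
      simpa [pow_eq_zero_iff] using this
    rw [h] at hv0; rw [h1] at hv1
    exact hu ⟨hv1.symm, neg_eq_zero.mp hv0.symm⟩
  have hfac : (v1 - I*v0) * (v1 + I*v0) = 0 := by
    have hI : I * I = -1 := Complex.I_mul_I
    linear_combination hv2 - v0^2 * hI - hv2 + hv2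
  obtain ⟨ε, hεI, hεv⟩ : ∃ ε : ℂ, (ε = I ∨ ε = -I) ∧ v1 = ε * v0 := by
    rcases mul_eq_zero.mp hfac with h | h
    · exact ⟨I, Or.inl rfl, by linear_combination h⟩
    · exact ⟨-I, Or.inr rfl, by linear_combination h⟩
  have hε2 : ε * ε = -1 := by
    rcases hεI with h | h <;> rw [h] <;> simp [Complex.I_mul_I]
  have hlin : ∀ qq ∈ SH, (p₀ 0 - qq 0) + ε * (p₀ 1 - qq 1) = 0 := by
    intro qq hqq
    have h := (coeffs qq hqq).2
    rw [hεv] at h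
    have h' : v0 * ((p₀ 0 - qq 0) + ε * (p₀ 1 - qq 1)) = 0 := by linear_combination h
    rcases mul_eq_zero.mp h' with h'' | h''
    · exact absurd h'' hvne
    · exact h''
  have hRzero : ∀ qq ∈ SH, eval qq R = 0 := by
    intro qq hqq
    have hst := star p₀ hp₀ qq hqq
    have hl := hlin qq hqq
    linear_combination hst - ((p₀ 0 - qq 0) - ε * (p₀ 1 - qq 1)) * hl - (p₀ 1 - qq 1)^2 * hε2
  obtain ⟨c₀, hc₀⟩ : ∃ c₀ : ℂ, c₀ = p₀ 0 + ε * p₀ 1 := ⟨_, rfl⟩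
  have hqline : ∀ qq ∈ SH, qq 0 = c₀ - ε * qq 1 := by
    intro qq hqq
    have := hlin qq hqq
    rw [hc₀]
    linear_combination -this
  obtain ⟨D, hDdef⟩ : ∃ D : Set ℂ, D = (fun qq : Fin 2 → ℂ => qq 1) '' SH := ⟨_, rfl⟩
  have hD : D.Infinite := by
    rw [hDdef]
    apply Set.Infinite.image _ hSH
    intro a ha b hb hab
    have h1 : a 1 = b 1 := hab
    have h0 : a 0 = b 0 := by rw [hqline a ha, hqline b hb, h1]
    calc a = ![a 0, a 1] := (eta2 a).symm
      _ = ![b 0, b 1] := by rw [h0, h1]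
      _ = b := eta2 b
  have hz : ∀ d ∈ D, eval ![c₀ - ε * d, d] R = 0 := by
    intro d hd
    rw [hDdef] at hd
    obtain ⟨qq, hqq, rfl⟩ := hd
    have : (![c₀ - ε * qq 1, qq 1] : Fin 2 → ℂ) = qq := by
      funext i
      fin_cases i
      · exact (hqline qq hqq).symm
      · rfl
    rw [this]
    exact hRzero qq hqq
  have hdvd := dvd_of_line_zeros R ε c₀ D hD hz
  refine ⟨c₀, ?_⟩
  rcases hεI with h | h
  · left; rw [← h]; exact hdvd
  · right
    have heq : (X 0 - C I * X 1 - C c₀ : MvPolynomial (Fin 2) ℂ)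
        = X 0 + C ε * X 1 - C c₀ := by
      rw [h, map_neg]; ring
    rw [heq]; exact hdvd

/-- `F = (x − z)² + (y − t)² + R(z,t)` with `R ≠ 0` of degree at most 2 is Cartesian
iff `R` is divisible by `z + it − c` or `z − it − c` for some `c ∈ ℂ`. -/
theorem cartesian_iff_linear_factor
    (R : MvPolynomial (Fin 2) ℂ) (hR0 : R ≠ 0) (hRdeg : R.totalDegree ≤ 2) :
    IsCartesian
      ((MvPolynomial.X 0 - MvPolynomial.X 2) ^ 2
        + (MvPolynomial.X 1 - MvPolynomial.X 3) ^ 2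
        + MvPolynomial.rename (![2, 3] : Fin 2 → Fin 4) R) ↔
    ∃ c : ℂ,
      ((MvPolynomial.X 0 + MvPolynomial.C Complex.I * MvPolynomial.X 1
          - MvPolynomial.C c : MvPolynomial (Fin 2) ℂ) ∣ R) ∨
      ((MvPolynomial.X 0 - MvPolynomial.C Complex.I * MvPolynomial.X 1
          - MvPolynomial.C c : MvPolynomial (Fin 2) ℂ) ∣ R) := by
  constructor
  · intro h
    exact hard_dir R h
  · rintro ⟨c, h | h⟩
    · exact easy_dir R I c Complex.I_mul_I h
    · have heq : (X 0 - C I * X 1 - C c : MvPolynomial (Fin 2) ℂ)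
          = X 0 + C (-I) * X 1 - C c := by
        rw [map_neg]; ring
      rw [heq] at h
      exact easy_dir R (-I) c (by simp [Complex.I_mul_I]) h
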